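/- PIE bound for the randomized response: let Q_RR be the ε-RR on alphabet 𝒳 of size k, and let θ = (e^ε−1)/(k+e^ε−1). For any joint distribution of (U,X) with U over a finite user set and X over 𝒳, if Y is produced by applying Q_RR to X, then I(U;Y) ≤ θ · I(U;X). -/

import Mathlib

open Finset Real

/-- A probability mass function on a finite type. -/
def IsPmf {A : Type*} [Fintype A] (p : A → ℝ) : Prop :=
  (∀ a, 0 ≤ p a) ∧ ∑ a, p a = 1

/-- Mutual information (in bits) of a joint pmf on `A × B`. -/
noncomputable def mi2 {A B : Type*} [Fintype A] [Fintype B] (p : A × B → ℝ) : ℝ :=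
  ∑ a : A, ∑ b : B, p (a, b) *
    Real.logb 2 (p (a, b) / ((∑ b' : B, p (a, b')) * (∑ a' : A, p (a', b))))

lemma loglb (x : ℝ) (hx : 0 < x) : 1 - x⁻¹ ≤ Real.log x := by
  have h := Real.log_le_sub_one_of_pos (inv_pos.mpr hx)
  rw [Real.log_inv] at h; linarith

lemma logsum (a b c : ℝ) (ha : 0 < a) (hb : 0 < b) (hc : 0 ≤ c) :
    (a + c) * Real.log ((a + c) / (b + c)) ≤ a * Real.log (a / b) := by
  have hA : 0 < a + c := by positivity
  have hB : 0 < b + c := by positivity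
  have h1 : 1 - ((a*(b+c))/(b*(a+c)))⁻¹ ≤ Real.log ((a*(b+c))/(b*(a+c))) :=
    loglb _ (by positivity)
  have h2 : 1 - ((b+c)/(a+c))⁻¹ ≤ Real.log ((b+c)/(a+c)) := loglb _ (by positivity)
  rw [Real.log_div (by positivity) (by positivity), Real.log_mul (by positivity) (by positivity),
      Real.log_mul (by positivity) (by positivity)] at h1
  rw [Real.log_div (by positivity) (by positivity)] at h2
  rw [Real.log_div (by positivity) (by positivity), Real.log_div (by positivity) (by positivity)]
  have e1 : a * (1 - ((a*(b+c))/(b*(a+c)))⁻¹) = a - b*(a+c)/(b+c) := by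
    field_simp
  have e2 : c * (1 - ((b+c)/(a+c))⁻¹) = c - c*(a+c)/(b+c) := by
    field_simp
  have e3 : (a - b*(a+c)/(b+c)) + (c - c*(a+c)/(b+c)) = 0 := by
    field_simp; ring
  have g1 := mul_le_mul_of_nonneg_left h1 ha.le
  have g2 := mul_le_mul_of_nonneg_left h2 hc
  nlinarith [g1, g2]

lemma keylem (t a b c : ℝ) (ht0 : 0 ≤ t) (ht1 : t ≤ 1) (ha : 0 ≤ a) (hb : 0 ≤ b)
    (hc : 0 ≤ c) (hab : 0 < a → 0 < b) :
    (t*a + (1-t)*c) * Real.logb 2 ((t*a + (1-t)*c) / (t*b + (1-t)*c)) ≤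
      t * (a * Real.logb 2 (a/b)) := by
  rcases eq_or_lt_of_le ht0 with h0 | h0
  · rcases eq_or_lt_of_le hc with hc0 | hc0
    · simp [← h0, ← hc0]
    · simp [← h0, div_self (ne_of_gt hc0)]
  · rcases eq_or_lt_of_le ha with hA | hA
    · -- a = 0
      simp only [← hA, mul_zero, zero_mul, zero_add, mul_zero]
      rcases eq_or_lt_of_le (mul_nonneg (by linarith : (0:ℝ) ≤ 1 - t) hc) with hz | hz
      · rw [← hz]; simp
      · apply mul_nonpos_of_nonneg_of_nonpos hz.le
        apply Real.logb_nonpos one_lt_two (by positivity)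
        apply div_le_one_of_le₀ (by linarith [mul_nonneg h0.le hb]) (by positivity)
    · have hb' := hab hA
      have key := logsum (t*a) (t*b) ((1-t)*c) (by positivity) (by positivity)
        (by nlinarith)
      rw [mul_div_mul_left _ _ (ne_of_gt h0)] at key
      have h2 : (0:ℝ) < Real.log 2 := Real.log_pos one_lt_two
      simp only [Real.logb]
      rw [show (t*a + (1-t)*c) * (Real.log ((t*a + (1-t)*c) / (t*b + (1-t)*c)) / Real.log 2)
          = ((t*a + (1-t)*c) * Real.log ((t*a + (1-t)*c) / (t*b + (1-t)*c))) / Real.log 2 by ring,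
        show t * (a * (Real.log (a/b) / Real.log 2)) = (t*a * Real.log (a/b)) / Real.log 2 by ring]
      exact (div_le_div_iff_of_pos_right h2).mpr key

theorem stmt7 {U 𝒳 : Type*} [Fintype U] [Fintype 𝒳] [DecidableEq 𝒳]
    (hk : 2 ≤ Fintype.card 𝒳) (ε : ℝ) (hε : 0 ≤ ε)
    (p : U × 𝒳 → ℝ) (hp : IsPmf p) :
    mi2 (fun uy : U × 𝒳 => ∑ x : 𝒳, p (uy.1, x) *
        (if uy.2 = x then Real.exp ε / ((Fintype.card 𝒳 : ℝ) + Real.exp ε - 1)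
          else 1 / ((Fintype.card 𝒳 : ℝ) + Real.exp ε - 1))) ≤
      (Real.exp ε - 1) / ((Fintype.card 𝒳 : ℝ) + Real.exp ε - 1) * mi2 p := by
  obtain ⟨hp0, hp1⟩ := hp
  set k : ℝ := (Fintype.card 𝒳 : ℝ) with hkdef
  have hk2 : (2:ℝ) ≤ k := by rw [hkdef]; exact_mod_cast hk
  set E := Real.exp ε with hEdef
  have hE1 : (1:ℝ) ≤ E := by
    rw [hEdef, show (1:ℝ) = Real.exp 0 from (Real.exp_zero).symm]
    exact Real.exp_le_exp.mpr hε
  have hD : (0:ℝ) < k + E - 1 := by linarith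
  set D := k + E - 1 with hDdef
  set θ := (E - 1)/D with hθdef
  have hθ0 : 0 ≤ θ := div_nonneg (by linarith) hD.le
  have hθ1 : θ ≤ 1 := by rw [hθdef, div_le_one hD, hDdef]; linarith
  have hq : ∀ u y, (∑ x, p (u, x) * (if y = x then E/D else 1/D))
      = θ * p (u, y) + (∑ x, p (u, x))/D := by
    intro u y
    have step : ∀ x : 𝒳, p (u,x) * (if y = x then E/D else 1/D)
        = (if y = x then p (u,x) * ((E-1)/D) else 0) + p (u,x) * (1/D) := by
      intro x; split <;> ring
    rw [Finset.sum_congr rfl (fun x _ => step x), Finset.sum_add_distrib,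
      Finset.sum_ite_eq, ← Finset.sum_mul]
    simp only [Finset.mem_univ, if_true, hθdef]
    ring
  have hfun : (fun uy : U × 𝒳 => ∑ x, p (uy.1, x) * (if uy.2 = x then E/D else 1/D))
      = fun uy => θ * p uy + (∑ x, p (uy.1, x))/D := by
    funext ⟨u, y⟩; exact hq u y
  rw [hfun]
  have hR : θ * mi2 p = ∑ u : U, ∑ y : 𝒳, θ * (p (u, y) *
      Real.logb 2 (p (u, y) / ((∑ b' : 𝒳, p (u, b')) * (∑ a' : U, p (a', y))))) := by
    rw [mi2, Finset.mul_sum]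
    exact Finset.sum_congr rfl fun u _ => Finset.mul_sum _ _ _
  rw [hR, mi2]
  apply Finset.sum_le_sum
  intro u _
  apply Finset.sum_le_sum
  intro y _
  have hSU : (∑ b' : 𝒳, (θ * p (u, b') + (∑ x, p (u, x))/D)) = ∑ x, p (u, x) := by
    rw [Finset.sum_add_distrib, ← Finset.mul_sum, Finset.sum_const, Finset.card_univ,
      nsmul_eq_mul, ← hkdef, hθdef]
    field_simp
    rw [hDdef]; ring
  have hSY : (∑ a' : U, (θ * p (a', y) + (∑ x, p (a', x))/D))
      = θ * (∑ a' : U, p (a', y)) + 1/D := by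
    rw [Finset.sum_add_distrib, ← Finset.mul_sum, ← Finset.sum_div]
    congr 1
    rw [← Fintype.sum_prod_type, hp1]
  rw [hSU, hSY]
  set S := ∑ x, p (u, x) with hSdef
  set T := ∑ a' : U, p (a', y) with hTdef
  have hS0 : 0 ≤ S := Finset.sum_nonneg fun x _ => hp0 _
  have hT0 : 0 ≤ T := Finset.sum_nonneg fun x _ => hp0 _
  have hpS : p (u, y) ≤ S := Finset.single_le_sum (fun x _ => hp0 (u, x)) (Finset.mem_univ y)
  have hpT : p (u, y) ≤ T := Finset.single_le_sum (fun a _ => hp0 (a, y)) (Finset.mem_univ u)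
  have hab : 0 < p (u, y) → 0 < S * T :=
    fun h => mul_pos (lt_of_lt_of_le h hpS) (lt_of_lt_of_le h hpT)
  have key := keylem θ (p (u, y)) (S * T) (S / k) hθ0 hθ1 (hp0 _)
    (mul_nonneg hS0 hT0) (div_nonneg hS0 (by linarith)) hab
  have e1 : (1 - θ) * (S / k) = S / D := by
    rw [hθdef]; field_simp; rw [hDdef]; ring
  rw [e1, show θ * (S * T) + S / D = S * (θ * T + 1/D) from by ring] at key
  exact key
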